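/- Let δ ∈ (0,1) and let 𝒱_δ be the linear v-transform with fulcrum δ. Let (V₁,V₂) be a random vector in [0,1]² whose one-dimensional margins are uniform, let W₁, W₂ be i.i.d. uniform random variables on [0,1] independent of (V₁,V₂), and set U_i = δ(1−V_i) if W_i ≤ δ and U_i = δ + (1−δ)V_i if W_i > δ, for i = 1,2 (the stochastic inversion of 𝒱_δ). Then 12·E[U₁U₂] − 3 = (2δ−1)²·(12·E[V₁V₂] − 3); i.e., the Pearson correlation of (U₁,U₂) equals (2δ−1)² times the Pearson correlation of (V₁,V₂). -/

import Mathlib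

/-!
STATEMENT 10: for the linear v-transform with fulcrum `δ`, the stochastic
inversion `(U₁,U₂)` of a pair `(V₁,V₂)` with uniform margins satisfies
`12·E[U₁U₂] - 3 = (2δ-1)²·(12·E[V₁V₂] - 3)`, i.e. the Pearson correlation of
`(U₁,U₂)` is `(2δ-1)²` times that of `(V₁,V₂)`.
-/

open Set MeasureTheory

theorem stmt_10 {Ω : Type*} [MeasurableSpace Ω] (P : Measure Ω) [IsProbabilityMeasure P]
    (δ : ℝ) (hδ : δ ∈ Ioo (0:ℝ) 1)
    (V₁ V₂ W₁ W₂ : Ω → ℝ)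
    (hV₁m : Measurable V₁) (hV₂m : Measurable V₂)
    (hW₁m : Measurable W₁) (hW₂m : Measurable W₂)
    -- `(V₁,V₂)` has uniform one-dimensional margins
    (hV₁ : Measure.map V₁ P = volume.restrict (Icc (0:ℝ) 1))
    (hV₂ : Measure.map V₂ P = volume.restrict (Icc (0:ℝ) 1))
    -- `W₁, W₂` are i.i.d. uniform on `[0,1]`, independent of `(V₁,V₂)`
    (hW : Measure.map (fun ω => ((V₁ ω, V₂ ω), (W₁ ω, W₂ ω))) P
      = (Measure.map (fun ω => (V₁ ω, V₂ ω)) P).prod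
          ((volume.restrict (Icc (0:ℝ) 1)).prod (volume.restrict (Icc (0:ℝ) 1))))
    -- stochastic inversion of the linear v-transform `𝒱_δ`
    (U₁ U₂ : Ω → ℝ)
    (hU₁ : ∀ ω, U₁ ω = if W₁ ω ≤ δ then δ * (1 - V₁ ω) else δ + (1 - δ) * V₁ ω)
    (hU₂ : ∀ ω, U₂ ω = if W₂ ω ≤ δ then δ * (1 - V₂ ω) else δ + (1 - δ) * V₂ ω) :
    12 * (∫ ω, U₁ ω * U₂ ω ∂P) - 3
      = (2 * δ - 1) ^ 2 * (12 * (∫ ω, V₁ ω * V₂ ω ∂P) - 3) := by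
  obtain ⟨hδ0, hδ1⟩ := hδ
  have hνprob : IsProbabilityMeasure (volume.restrict (Icc (0:ℝ) 1)) :=
    ⟨by simp [Real.volume_Icc]⟩
  set ν := volume.restrict (Icc (0:ℝ) 1) with hν
  set μ := Measure.map (fun ω => (V₁ ω, V₂ ω)) P with hμ
  have hμprob : IsProbabilityMeasure μ := Measure.isProbabilityMeasure_map (by fun_prop)
  set f : ℝ → ℝ → ℝ := fun v w => if w ≤ δ then δ * (1 - v) else δ + (1 - δ) * v with hfdef
  have hfm : Measurable (fun x : ℝ × ℝ => f x.1 x.2) := by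
    apply Measurable.ite (measurableSet_le measurable_snd measurable_const) <;> fun_prop
  set g : (ℝ × ℝ) × (ℝ × ℝ) → ℝ := fun x => f x.1.1 x.2.1 * f x.1.2 x.2.2 with hgdef
  have hgm : Measurable g := by
    have m1 : Measurable fun x : (ℝ × ℝ) × (ℝ × ℝ) => (x.1.1, x.2.1) := by fun_prop
    have m2 : Measurable fun x : (ℝ × ℝ) × (ℝ × ℝ) => (x.1.2, x.2.2) := by fun_prop
    exact (hfm.comp m1).mul (hfm.comp m2)
  -- a.e. the V-pair lies in the unit square
  have haeν : ∀ᵐ x ∂ν, x ∈ Icc (0:ℝ) 1 := by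
    rw [hν]; exact ae_restrict_mem measurableSet_Icc
  have haeV₁ : ∀ᵐ ω ∂P, V₁ ω ∈ Icc (0:ℝ) 1 := by
    have h := haeν
    rw [← hV₁] at h
    exact (ae_map_iff hV₁m.aemeasurable measurableSet_Icc).mp h
  have haeV₂ : ∀ᵐ ω ∂P, V₂ ω ∈ Icc (0:ℝ) 1 := by
    have h := haeν
    rw [← hV₂] at h
    exact (ae_map_iff hV₂m.aemeasurable measurableSet_Icc).mp h
  have hsqm : MeasurableSet {p : ℝ × ℝ | p.1 ∈ Icc (0:ℝ) 1 ∧ p.2 ∈ Icc (0:ℝ) 1} :=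
    (measurableSet_Icc.preimage measurable_fst).inter
      (measurableSet_Icc.preimage measurable_snd)
  have haesq : ∀ᵐ p ∂μ, p.1 ∈ Icc (0:ℝ) 1 ∧ p.2 ∈ Icc (0:ℝ) 1 := by
    rw [hμ, ae_map_iff (by fun_prop) hsqm]
    filter_upwards [haeV₁, haeV₂] with ω h1 h2 using ⟨h1, h2⟩
  have haeprod : ∀ᵐ x ∂(μ.prod (ν.prod ν)),
      x.1.1 ∈ Icc (0:ℝ) 1 ∧ x.1.2 ∈ Icc (0:ℝ) 1 := by
    have hmf : Measure.map Prod.fst (μ.prod (ν.prod ν)) = μ := by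
      simp [Measure.map_fst_prod]
    have h := haesq
    rw [← hmf, ae_map_iff measurable_fst.aemeasurable hsqm] at h
    exact h
  -- boundedness of f on the unit interval
  have hfbound : ∀ v ∈ Icc (0:ℝ) 1, ∀ w, |f v w| ≤ 1 := by
    intro v hv w
    obtain ⟨h0, h1⟩ := hv
    simp only [hfdef]
    split <;> rw [abs_le] <;> constructor <;> nlinarith
  have hgint : Integrable g (μ.prod (ν.prod ν)) := by
    apply Integrable.mono' (integrable_const 1) hgm.aestronglyMeasurable
    filter_upwards [haeprod] with x hx
    have h1 := hfbound _ hx.1 x.2.1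
    have h2 := hfbound _ hx.2 x.2.2
    calc ‖g x‖ = |f x.1.1 x.2.1| * |f x.1.2 x.2.2| := by
          simp [hgdef, abs_mul, Real.norm_eq_abs]
      _ ≤ 1 * 1 := mul_le_mul h1 h2 (abs_nonneg _) zero_le_one
      _ = 1 := one_mul 1
  -- step 1: transport to the product measure
  have step1 : ∫ ω, U₁ ω * U₂ ω ∂P = ∫ x, g x ∂(μ.prod (ν.prod ν)) := by
    rw [← hW, integral_map (by fun_prop) hgm.aestronglyMeasurable]
    refine integral_congr_ae (Filter.Eventually.of_forall fun ω => ?_)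
    simp [hU₁ ω, hU₂ ω, hgdef, hfdef]
  -- the one-dimensional integral of f
  have hkey : ∀ v : ℝ, ∫ w, f v w ∂ν = δ + (1 - 2*δ) * v := by
    intro v
    have hiic : ν (Iic δ) = ENNReal.ofReal δ := by
      rw [hν, Measure.restrict_apply measurableSet_Iic]
      rw [show Iic δ ∩ Icc (0:ℝ) 1 = Icc 0 δ from by
        ext x
        simp only [mem_inter_iff, mem_Iic, mem_Icc]
        constructor
        · rintro ⟨h1, h2, h3⟩; exact ⟨h2, h1⟩
        · rintro ⟨h1, h2⟩; exact ⟨h2, h1, by linarith⟩]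
      simp [Real.volume_Icc]
    have hrw : (fun w => f v w) = fun w =>
        (Iic δ).indicator (fun _ => δ * (1 - v) - (δ + (1 - δ) * v)) w
          + (δ + (1 - δ) * v) := by
      funext w
      by_cases h : w ≤ δ <;> simp [hfdef, indicator, h]
    rw [hrw, integral_add ((integrable_const _).indicator measurableSet_Iic)
          (integrable_const _),
        integral_indicator measurableSet_Iic, setIntegral_const, integral_const]
    simp only [measureReal_def, hiic, measure_univ, ENNReal.toReal_one, one_smul, smul_eq_mul,
      ENNReal.toReal_ofReal hδ0.le]
    ring
  -- step 2+3: Fubini and the inner integral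
  have step2 : ∫ x, g x ∂(μ.prod (ν.prod ν))
      = ∫ p, (δ + (1 - 2*δ) * p.1) * (δ + (1 - 2*δ) * p.2) ∂μ := by
    rw [integral_prod g hgint]
    refine integral_congr_ae (Filter.Eventually.of_forall fun p => ?_)
    show ∫ q : ℝ × ℝ, f p.1 q.1 * f p.2 q.2 ∂(ν.prod ν)
        = (δ + (1 - 2*δ) * p.1) * (δ + (1 - 2*δ) * p.2)
    rw [integral_prod_mul (fun w => f p.1 w) (fun w => f p.2 w), hkey, hkey]
  -- integrability of coordinates under μ
  have hintμ : ∀ h : ℝ × ℝ → ℝ, Measurable h →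
      (∀ p : ℝ × ℝ, p.1 ∈ Icc (0:ℝ) 1 → p.2 ∈ Icc (0:ℝ) 1 → ‖h p‖ ≤ 1) →
      Integrable h μ := by
    intro h hm hb
    apply Integrable.mono' (integrable_const 1) hm.aestronglyMeasurable
    filter_upwards [haesq] with p hp using hb p hp.1 hp.2
  have hint1 : Integrable (fun p : ℝ × ℝ => p.1) μ := by
    refine hintμ _ measurable_fst fun p hp1 _ => ?_
    rw [Real.norm_eq_abs, abs_le]; exact ⟨by linarith [hp1.1], hp1.2⟩
  have hint2 : Integrable (fun p : ℝ × ℝ => p.2) μ := by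
    refine hintμ _ measurable_snd fun p _ hp2 => ?_
    rw [Real.norm_eq_abs, abs_le]; exact ⟨by linarith [hp2.1], hp2.2⟩
  have hint12 : Integrable (fun p : ℝ × ℝ => p.1 * p.2) μ := by
    refine hintμ _ (measurable_fst.mul measurable_snd) fun p hp1 hp2 => ?_
    rw [Real.norm_eq_abs, abs_mul]
    calc |p.1| * |p.2| ≤ 1 * 1 := by
          apply mul_le_mul _ _ (abs_nonneg _) zero_le_one <;>
            rw [abs_le] <;> constructor <;> first
              | linarith [hp1.1, hp1.2] | linarith [hp2.1, hp2.2]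
      _ = 1 := one_mul 1
  -- moments
  have hid : ∫ x, x ∂ν = (1:ℝ)/2 := by
    rw [hν, MeasureTheory.integral_Icc_eq_integral_Ioc,
      ← intervalIntegral.integral_of_le (zero_le_one : (0:ℝ) ≤ 1)]
    simp
  have hE1 : ∫ p : ℝ × ℝ, p.1 ∂μ = 1/2 := by
    rw [hμ, integral_map (by fun_prop) measurable_fst.aestronglyMeasurable]
    have : ∫ ω, V₁ ω ∂P = ∫ x, x ∂(Measure.map V₁ P) :=
      (integral_map hV₁m.aemeasurable aestronglyMeasurable_id).symm
    simpa [this, hV₁, ← hν] using hid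
  have hE2 : ∫ p : ℝ × ℝ, p.2 ∂μ = 1/2 := by
    rw [hμ, integral_map (by fun_prop) measurable_snd.aestronglyMeasurable]
    have : ∫ ω, V₂ ω ∂P = ∫ x, x ∂(Measure.map V₂ P) :=
      (integral_map hV₂m.aemeasurable aestronglyMeasurable_id).symm
    simpa [this, hV₂, ← hν] using hid
  have hE12 : ∫ p : ℝ × ℝ, p.1 * p.2 ∂μ = ∫ ω, V₁ ω * V₂ ω ∂P := by
    rw [hμ, integral_map (by fun_prop)
      (show Measurable (fun p : ℝ × ℝ => p.1 * p.2) from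
        measurable_fst.mul measurable_snd).aestronglyMeasurable]
  -- expand the quadratic integrand
  have step4 : ∫ p, (δ + (1 - 2*δ) * p.1) * (δ + (1 - 2*δ) * p.2) ∂μ
      = δ*δ + (δ*(1-2*δ))*(1/2) + (δ*(1-2*δ))*(1/2)
        + ((1-2*δ)*(1-2*δ)) * ∫ ω, V₁ ω * V₂ ω ∂P := by
    have hexp : (fun p : ℝ × ℝ => (δ + (1 - 2*δ) * p.1) * (δ + (1 - 2*δ) * p.2))
        = fun p : ℝ × ℝ => (δ*δ + (δ*(1-2*δ))*p.2 + (δ*(1-2*δ))*p.1)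
            + ((1-2*δ)*(1-2*δ))*(p.1*p.2) := by
      funext p; ring
    have hD : Integrable (fun p : ℝ × ℝ => ((1-2*δ)*(1-2*δ))*(p.1*p.2)) μ :=
      hint12.const_mul _
    have hC : Integrable (fun p : ℝ × ℝ => (δ*(1-2*δ))*p.1) μ := hint1.const_mul _
    have hE : Integrable (fun p : ℝ × ℝ => (δ*(1-2*δ))*p.2) μ := hint2.const_mul _
    have hB : Integrable (fun p : ℝ × ℝ => δ*δ + (δ*(1-2*δ))*p.2) μ :=
      (integrable_const _).add hE
    have hA : Integrable (fun p : ℝ × ℝ => δ*δ + (δ*(1-2*δ))*p.2 + (δ*(1-2*δ))*p.1) μ :=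
      hB.add hC
    rw [hexp, integral_add hA hD, integral_add hB hC,
        integral_add (integrable_const _) hE,
        integral_const, MeasureTheory.integral_const_mul, MeasureTheory.integral_const_mul,
        MeasureTheory.integral_const_mul, hE1, hE2, hE12]
    simp [measure_univ]
  rw [step1, step2, step4]
  ring
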